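/- For an associative unital ring R the following conditions are equivalent: (i) R is von Neumann regular; (ii) the zero complex is the only acyclic pure-minimal chain complex of R-modules; (iii) a chain complex M of R-modules is pure-minimal if and only if the zero complex is the only acyclic subcomplex of M. -/

import Mathlib

/- Common definitions: chain complexes of modules, purity, pure-acyclicity,
   pure quasi-isomorphisms, flavors of minimality, semi-flat, semi-projective and
   semi-injective complexes, and ring-theoretic conditions, following the paper. -/

open CategoryTheory CategoryTheory.Limits

universe u

namespace PaperPM

variable (R : Type u) [Ring R]

/-- Chain complexes of left `R`-modules, indexed by `ℤ`. -/
abbrev Cx := ChainComplex (ModuleCat.{u} R) ℤ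

section ModuleLevel

variable {L M N : Type u} [AddCommGroup L] [AddCommGroup M] [AddCommGroup N]
  [Module R L] [Module R M] [Module R N]

/-- `0 → L → M → N → 0` is a short exact sequence of modules. -/
def ModSES (f : L →ₗ[R] M) (g : M →ₗ[R] N) : Prop :=
  Function.Injective f ∧ Function.Surjective g ∧ Function.Exact f g

/-- The sequence `0 → Hom(A,L) → Hom(A,M) → Hom(A,N) → 0` is exact for every
finitely presented module `A`; together with `ModSES` this is purity. -/
def HomExact (f : L →ₗ[R] M) (g : M →ₗ[R] N) : Prop :=
  ∀ (A : Type u) [AddCommGroup A] [Module R A], Module.FinitePresentation R A →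
    Function.Injective (fun h : A →ₗ[R] L => f ∘ₗ h) ∧
    Function.Exact (fun h : A →ₗ[R] L => f ∘ₗ h) (fun h : A →ₗ[R] M => g ∘ₗ h) ∧
    Function.Surjective (fun h : A →ₗ[R] M => g ∘ₗ h)

/-- A pure short exact sequence of modules. -/
def PureSES (f : L →ₗ[R] M) (g : M →ₗ[R] N) : Prop :=
  ModSES R f g ∧ HomExact R f g

end ModuleLevel

/-- A module `F` is flat iff every short exact sequence `0 → L → M → F → 0` is pure. -/
def FlatModule (F : Type u) [AddCommGroup F] [Module R F] : Prop :=
  ∀ (L M : Type u) [AddCommGroup L] [AddCommGroup M] [Module R L] [Module R M]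
    (f : L →ₗ[R] M) (g : M →ₗ[R] F), ModSES R f g → HomExact R f g

/-- A module `P` is pure-projective if `Hom(P,−)` leaves every pure exact sequence exact. -/
def PureProjectiveModule (P : Type u) [AddCommGroup P] [Module R P] : Prop :=
  ∀ (L M N : Type u) [AddCommGroup L] [AddCommGroup M] [AddCommGroup N]
    [Module R L] [Module R M] [Module R N] (f : L →ₗ[R] M) (g : M →ₗ[R] N),
    PureSES R f g →
      Function.Injective (fun h : P →ₗ[R] L => f ∘ₗ h) ∧
      Function.Exact (fun h : P →ₗ[R] L => f ∘ₗ h) (fun h : P →ₗ[R] M => g ∘ₗ h) ∧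
      Function.Surjective (fun h : P →ₗ[R] M => g ∘ₗ h)

/-- A module `E` is pure-injective if `Hom(−,E)` leaves every pure exact sequence exact. -/
def PureInjectiveModule (E : Type u) [AddCommGroup E] [Module R E] : Prop :=
  ∀ (L M N : Type u) [AddCommGroup L] [AddCommGroup M] [AddCommGroup N]
    [Module R L] [Module R M] [Module R N] (f : L →ₗ[R] M) (g : M →ₗ[R] N),
    PureSES R f g →
      Function.Injective (fun h : N →ₗ[R] E => h ∘ₗ g) ∧
      Function.Exact (fun h : N →ₗ[R] E => h ∘ₗ g) (fun h : M →ₗ[R] E => h ∘ₗ f) ∧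
      Function.Surjective (fun h : M →ₗ[R] E => h ∘ₗ f)

/-- `R` is von Neumann regular: every (left) `R`-module is flat. -/
def VonNeumannRegular : Prop :=
  ∀ (M : Type u) [AddCommGroup M] [Module R M], FlatModule R M

/-- `R` is left perfect: every flat left `R`-module is projective. -/
def LeftPerfect : Prop :=
  ∀ (M : Type u) [AddCommGroup M] [Module R M], FlatModule R M → Module.Projective R M

/-- `R` is semi-perfect: every finitely generated flat left `R`-module is projective. -/
def SemiPerfect : Prop :=
  ∀ (M : Type u) [AddCommGroup M] [Module R M],
    Module.Finite R M → FlatModule R M → Module.Projective R M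

/-- A complex is acyclic if its homology vanishes, i.e. it is exact at every degree. -/
def Acyclic (M : Cx R) : Prop :=
  ∀ i : ℤ, Function.Exact (M.d (i + 1) i) (M.d i (i - 1))

/-- The cycle submodule `Z_i(M)`. -/
noncomputable def cyc (M : Cx R) (i : ℤ) : Submodule R (M.X i) :=
  LinearMap.ker (M.d i (i - 1)).hom

lemma d_mem_cyc (M : Cx R) (i : ℤ) (x : M.X i) :
    M.d i (i - 1) x ∈ cyc R M (i - 1) := by
  have h := congrArg (fun f => ModuleCat.Hom.hom f x) (M.d_comp_d i (i - 1) (i - 1 - 1))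
  rw [cyc, LinearMap.mem_ker]
  exact h

/-- The map `M_i → Z_{i-1}(M)` induced by the differential. -/
noncomputable def cycMap (M : Cx R) (i : ℤ) : M.X i →ₗ[R] cyc R M (i - 1) :=
  LinearMap.codRestrict (cyc R M (i - 1)) (M.d i (i - 1)).hom (d_mem_cyc R M i)

/-- A complex is pure-acyclic if it is acyclic and each sequence
`0 → Z_i(M) → M_i → Z_{i-1}(M) → 0` is pure. -/
def PureAcyclic (M : Cx R) : Prop :=
  ∀ i : ℤ, PureSES R (cyc R M i).subtype (cycMap R M i)

/-- A morphism of complexes is null-homotopic. -/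
def NullHomotopic {M N : Cx R} (f : M ⟶ N) : Prop :=
  Nonempty (Homotopy f 0)

/-- A complex is contractible if its identity is null-homotopic. -/
def Contractible (M : Cx R) : Prop :=
  Nonempty (Homotopy (𝟙 M) 0)

/-- A morphism of complexes is a homotopy equivalence: it has an inverse up to
chain homotopy. -/
def IsHomotopyEquiv {M N : Cx R} (α : M ⟶ N) : Prop :=
  ∃ β : N ⟶ M, Nonempty (Homotopy (α ≫ β) (𝟙 M)) ∧ Nonempty (Homotopy (β ≫ α) (𝟙 N))

/-- A complex is minimal if every homotopy equivalence `M → M` is an isomorphism. -/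
def Minimal (M : Cx R) : Prop :=
  ∀ α : M ⟶ M, IsHomotopyEquiv R α → IsIso α

/-- A morphism `α` of complexes is a pure quasi-isomorphism iff its mapping cone is
pure-acyclic, equivalently iff `Hom(A, α)` is a quasi-isomorphism for every finitely
presented module `A`. -/
def PureQuasiIso {M N : Cx R} (α : M ⟶ N) : Prop :=
  ∀ (A : ModuleCat.{u} R), Module.FinitePresentation R A →
    QuasiIso (((preadditiveCoyoneda.obj (Opposite.op A)).mapHomologicalComplex
      (ComplexShape.down ℤ)).map α)

/-- `0 → L → M → N → 0` is a short exact sequence of complexes. -/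
def CxSES {L M N : Cx R} (α : L ⟶ M) (β : M ⟶ N) : Prop :=
  ∀ i : ℤ, Function.Injective (α.f i) ∧ Function.Surjective (β.f i) ∧
    Function.Exact (α.f i) (β.f i)

/-- A short exact sequence of complexes is degreewise pure. -/
def DegreewisePure {L M N : Cx R} (α : L ⟶ M) (β : M ⟶ N) : Prop :=
  ∀ i : ℤ, HomExact R (α.f i).hom (β.f i).hom

/-- A short exact sequence of complexes is degreewise split. -/
def DegreewiseSplit {L M N : Cx R} (α : L ⟶ M) (β : M ⟶ N) : Prop :=
  ∀ i : ℤ, ∃ ρ : M.X i ⟶ L.X i, α.f i ≫ ρ = 𝟙 (L.X i)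

/-- A bounded complex of finitely presented modules. -/
def BoundedFPCx (A : Cx R) : Prop :=
  (∀ i, Module.FinitePresentation R (A.X i)) ∧
  ∃ a b : ℤ, ∀ i, (i < a ∨ b < i) → Subsingleton (A.X i)

/-- Purity in the category of complexes: the sequence of chain-map groups
`0 → Hom(A,L) → Hom(A,M) → Hom(A,N) → 0` is exact for every bounded complex `A`
of finitely presented modules. -/
def CxPure {L M N : Cx R} (α : L ⟶ M) (β : M ⟶ N) : Prop :=
  ∀ A : Cx R, BoundedFPCx R A →
    Function.Injective (fun h : A ⟶ L => h ≫ α) ∧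
    Function.Exact (fun h : A ⟶ L => h ≫ α) (fun h : A ⟶ M => h ≫ β) ∧
    Function.Surjective (fun h : A ⟶ M => h ≫ β)

/-- A complex is pure-minimal if the zero complex is its only pure-acyclic pure
subcomplex. -/
def PureMinimal (M : Cx R) : Prop :=
  ∀ (P Q : Cx R) (ι : P ⟶ M) (π : M ⟶ Q),
    CxSES R ι π → CxPure R ι π → PureAcyclic R P → IsZero P

/-- A complex is split-minimal if the zero complex is its only contractible split
subcomplex (direct summand). -/
def SplitMinimal (M : Cx R) : Prop :=
  ∀ (P : Cx R) (ι : P ⟶ M) (ρ : M ⟶ P), ι ≫ ρ = 𝟙 P → Contractible R P → IsZero P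

/-- A complex is semi-projective if it consists of projective modules and `Hom(P,−)`
preserves acyclicity; the latter amounts to every chain map into an acyclic complex
being null-homotopic. -/
def SemiProjective (P : Cx R) : Prop :=
  (∀ i, Module.Projective R (P.X i)) ∧
  ∀ N : Cx R, Acyclic R N → ∀ f : P ⟶ N, NullHomotopic R f

/-- A complex is semi-injective if it consists of injective modules and `Hom(−,I)`
preserves acyclicity; the latter amounts to every chain map from an acyclic complex
being null-homotopic. -/
def SemiInjective (I : Cx R) : Prop :=
  (∀ i, Module.Injective R (I.X i)) ∧
  ∀ N : Cx R, Acyclic R N → ∀ f : N ⟶ I, NullHomotopic R f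

section Dual

/-- The scalar action making the character group `Hom_ℤ(W, ℚ/ℤ)` of a right
`R`-module `W` a left `R`-module. -/
noncomputable instance charSMul (W : Type u) [AddCommGroup W] [Module Rᵐᵒᵖ W] :
    SMul R (CharacterModule W) :=
  ⟨fun r f => f.comp (DistribMulAction.toAddMonoidHom W (MulOpposite.op r))⟩

/-- The left `R`-module structure on the character group of a right `R`-module. -/
noncomputable instance charModule (W : Type u) [AddCommGroup W] [Module Rᵐᵒᵖ W] :
    Module R (CharacterModule W) where
  one_smul f := CharacterModule.ext _ fun w => by
    show f (MulOpposite.op (1 : R) • w) = f w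
    rw [MulOpposite.op_one, one_smul]
  mul_smul r s f := CharacterModule.ext _ fun w => by
    show f (MulOpposite.op (r * s) • w) = f (MulOpposite.op s • MulOpposite.op r • w)
    rw [MulOpposite.op_mul, mul_smul]
  smul_zero r := CharacterModule.ext _ fun w => rfl
  smul_add r f g := CharacterModule.ext _ fun w => rfl
  add_smul r s f := CharacterModule.ext _ fun w => by
    show f (MulOpposite.op (r + s) • w) = f (MulOpposite.op r • w) + f (MulOpposite.op s • w)
    rw [MulOpposite.op_add, add_smul, map_add]
  zero_smul f := CharacterModule.ext _ fun w => by
    show f (MulOpposite.op (0 : R) • w) = 0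
    rw [MulOpposite.op_zero, zero_smul, map_zero]

/-- The character module of a right `R`-module, as a left `R`-module. -/
noncomputable def dualMod (W : ModuleCat.{u} Rᵐᵒᵖ) : ModuleCat.{u} R :=
  ModuleCat.of R (CharacterModule W)

/-- The dual of a map of right `R`-modules. -/
noncomputable def dualMap {W W' : ModuleCat.{u} Rᵐᵒᵖ} (g : W ⟶ W') :
    dualMod R W' ⟶ dualMod R W :=
  ModuleCat.ofHom (
  { toFun := fun (f : CharacterModule ↥W') => (f.comp g.hom.toAddMonoidHom : CharacterModule ↥W),
    map_add' := fun _ _ => rfl,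
    map_smul' := fun r (f : CharacterModule ↥W') => CharacterModule.ext _ (fun w =>
      congrArg (fun x => f x) (g.hom.map_smul (MulOpposite.op r) w).symm) } :
      CharacterModule ↥W' →ₗ[R] CharacterModule ↥W)

lemma dualMap_comp {W W' W'' : ModuleCat.{u} Rᵐᵒᵖ} (g : W ⟶ W') (h : W' ⟶ W'') :
    dualMap R (g ≫ h) = dualMap R h ≫ dualMap R g := rfl

lemma dualMap_zero {W W' : ModuleCat.{u} Rᵐᵒᵖ} : dualMap R (0 : W ⟶ W') = 0 :=
  ModuleCat.hom_ext (LinearMap.ext (fun (f : CharacterModule ↥W') =>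
    CharacterModule.ext _ (fun _ => map_zero f)))

/-- The character dual of a complex `N` of right `R`-modules, as a complex of left
`R`-modules: `(N⁺)_i = (N_{-i})⁺`. -/
noncomputable def dualCx (N : ChainComplex (ModuleCat.{u} Rᵐᵒᵖ) ℤ) : Cx R :=
  ChainComplex.of (fun i => dualMod R (N.X (-i)))
    (fun i => dualMap R (N.d (-i) (-(i + 1))))
    (fun n => by rw [← dualMap_comp, N.d_comp_d, dualMap_zero])

/-- A complex is semi-flat if it consists of flat modules and `− ⊗ F` preserves
acyclicity; by character-module duality the latter amounts to every chain map into
the character dual of an acyclic complex of right `R`-modules being null-homotopic. -/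
def SemiFlat (F : Cx R) : Prop :=
  (∀ i, FlatModule R (F.X i)) ∧
  ∀ N : ChainComplex (ModuleCat.{u} Rᵐᵒᵖ) ℤ, Acyclic Rᵐᵒᵖ N →
    ∀ f : F ⟶ dualCx R N, NullHomotopic R f

end Dual

/-- Two complexes are isomorphic in the derived category iff they are linked by a
roof of quasi-isomorphisms. -/
def DerivedIso (M N : Cx R) : Prop :=
  ∃ (W : Cx R) (f : W ⟶ M) (g : W ⟶ N), QuasiIso f ∧ QuasiIso g

/-- The flat dimension of `M` is at most `n`: `M` is isomorphic in the derived
category to a complex of flat modules concentrated in degrees `≤ n`. -/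
def FdLe (M : Cx R) (n : ℤ) : Prop :=
  ∃ F : Cx R, (∀ i, FlatModule R (F.X i)) ∧ (∀ i, n < i → Subsingleton (F.X i)) ∧
    DerivedIso R M F

/-- The projective dimension of `M` is at most `n`: `M` is isomorphic in the derived
category to a complex of projective modules concentrated in degrees `≤ n`. -/
def PdLe (M : Cx R) (n : ℤ) : Prop :=
  ∃ P : Cx R, (∀ i, Module.Projective R (P.X i)) ∧ (∀ i, n < i → Subsingleton (P.X i)) ∧
    DerivedIso R M P



section Proofs

variable (R : Type u) [Ring R]


section ModuleLevel

variable {L M N A : Type u} [AddCommGroup L] [AddCommGroup M] [AddCommGroup N]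
  [AddCommGroup A] [Module R L] [Module R M] [Module R N] [Module R A]

lemma exists_factor_of_comp_zero {f : L →ₗ[R] M} {g : M →ₗ[R] N}
    (hses : ModSES R f g) (h : A →ₗ[R] M) (hz : g ∘ₗ h = 0) :
    ∃ e : A →ₗ[R] L, f ∘ₗ e = h := by
  obtain ⟨hinj, hsurj, hex⟩ := hses
  have hmem : ∀ a : A, h a ∈ LinearMap.range f := by
    intro a
    have : g (h a) = 0 := congrFun (congrArg DFunLike.coe hz) a
    exact (hex (h a)).mp this
  refine ⟨(LinearEquiv.ofInjective f hinj).symm.toLinearMap ∘ₗ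
    (h.codRestrict (LinearMap.range f) hmem), ?_⟩
  ext a
  have : f ((LinearEquiv.ofInjective f hinj).symm
      (h.codRestrict (LinearMap.range f) hmem a)) =
      ((LinearEquiv.ofInjective f hinj)
        ((LinearEquiv.ofInjective f hinj).symm
          (h.codRestrict (LinearMap.range f) hmem a)) : M) := rfl
  simp only [LinearMap.coe_comp, Function.comp_apply, LinearEquiv.coe_coe]
  rw [this, LinearEquiv.apply_symm_apply]
  rfl

lemma homExact_of_surj {f : L →ₗ[R] M} {g : M →ₗ[R] N} (hses : ModSES R f g)
    (hsurj : ∀ (A : Type u) [AddCommGroup A] [Module R A],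
      Module.FinitePresentation R A →
      Function.Surjective (fun h : A →ₗ[R] M => g ∘ₗ h)) :
    HomExact R f g := by
  intro A _ _ hA
  refine ⟨?_, ?_, hsurj A hA⟩
  · intro h₁ h₂ hh
    ext a
    exact hses.1 (congrFun (congrArg DFunLike.coe hh) a)
  · intro h
    constructor
    · intro hz
      obtain ⟨e, he⟩ := exists_factor_of_comp_zero R hses h hz
      exact ⟨e, he⟩
    · rintro ⟨e, rfl⟩
      ext a
      simp only [LinearMap.coe_comp, Function.comp_apply, LinearMap.zero_apply]
      exact (hses.2.2 (f (e a))).mpr ⟨e a, rfl⟩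

end ModuleLevel

lemma cycMap_surjective_of_acyclic (M : Cx R) (h : Acyclic R M) (i : ℤ) :
    Function.Surjective (cycMap R M i) := by
  rintro ⟨z, hz⟩
  have hz' : M.d (i-1) (i-1-1) z = 0 := hz
  have := (h (i-1) z).mp hz'
  rw [show i - 1 + 1 = i by ring] at this
  obtain ⟨x, hx⟩ := this
  exact ⟨x, Subtype.ext hx⟩

lemma modSES_cyc (M : Cx R) (h : Acyclic R M) (i : ℤ) :
    ModSES R (cyc R M i).subtype (cycMap R M i) := by
  refine ⟨Subtype.val_injective, cycMap_surjective_of_acyclic R M h i, ?_⟩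
  intro x
  constructor
  · intro hx
    have : M.d i (i-1) x = 0 := congrArg Subtype.val hx
    exact ⟨⟨x, this⟩, rfl⟩
  · rintro ⟨⟨y, hy⟩, rfl⟩
    exact Subtype.ext hy

lemma pureAcyclic_of_vnr (hv : VonNeumannRegular R) (M : Cx R) (h : Acyclic R M) :
    PureAcyclic R M := fun i =>
  ⟨modSES_cyc R M h i, hv _ _ _ _ _ (modSES_cyc R M h i)⟩

lemma exists_d_preimage_of_pureAcyclic (M : Cx R) (h : PureAcyclic R M)
    (j k : ℤ) (hk : k = j - 1) (x : M.X k) (hx : M.d k (k-1) x = 0) :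
    ∃ y : M.X j, M.d j k y = x := by
  subst hk
  obtain ⟨y, hy⟩ := (h j).1.2.1 ⟨x, hx⟩
  exact ⟨y, congrArg Subtype.val hy⟩

lemma d_d_zero (M : Cx R) (i j k : ℤ) (y : M.X i) :
    M.d j k (M.d i j y) = 0 := by
  have := congrArg (fun f => ModuleCat.Hom.hom f y) (M.d_comp_d i j k)
  exact this

lemma acyclic_of_pureAcyclic (M : Cx R) (h : PureAcyclic R M) : Acyclic R M := by
  intro i x
  constructor
  · intro hx
    exact exists_d_preimage_of_pureAcyclic R M h (i+1) i (by ring) x hx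
  · rintro ⟨y, rfl⟩
    exact d_d_zero R M (i+1) i (i-1) y

/-- the lifting property extracted from pure-acyclicity -/
lemma pureAcyclic_lift (M : Cx R) (h : PureAcyclic R M) (i k : ℤ) (hk : k = i - 1)
    (A : Type u) [AddCommGroup A] [Module R A] (hA : Module.FinitePresentation R A)
    (φ : A →ₗ[R] M.X k) (hφ : ∀ a, M.d k (k-1) (φ a) = 0) :
    ∃ ψ : A →ₗ[R] M.X i, ∀ a, M.d i k (ψ a) = φ a := by
  subst hk
  have hsurj := ((h i).2 A hA).2.2
  obtain ⟨ψ, hψ⟩ := hsurj (φ.codRestrict (cyc R M (i-1)) hφ)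
  refine ⟨ψ, fun a => ?_⟩
  exact congrArg Subtype.val (LinearMap.congr_fun hψ a)



variable (C : Cx R) (S : ∀ i, Submodule R (C.X i))

/-- Closedness of a family of submodules under the differential. -/
def Closed : Prop := ∀ (i : ℤ) (x : C.X i), x ∈ S i → C.d i (i-1) x ∈ S (i-1)

lemma le_comap_of_closed (hS : Closed R C S) (i j : ℤ) :
    S i ≤ Submodule.comap (C.d i j).hom (S j) := by
  by_cases h : j = i - 1
  · subst h; exact fun x hx => hS i x hx
  · have hz : C.d i j = 0 := C.shape i j (by simp only [ComplexShape.down_Rel]; omega)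
    intro x _
    rw [Submodule.mem_comap, hz]
    exact Submodule.zero_mem _

variable (hS : Closed R C S)

/-- The quotient complex `C/S`. -/
noncomputable def quotCx : Cx R where
  X i := ModuleCat.of R (C.X i ⧸ S i)
  d i j := ModuleCat.ofHom (Submodule.mapQ (S i) (S j) (C.d i j).hom (le_comap_of_closed R C S hS i j))
  shape i j h := by
    have hz : C.d i j = 0 := C.shape i j h
    refine ConcreteCategory.hom_ext _ _ fun q => ?_
    obtain ⟨x, rfl⟩ := Submodule.mkQ_surjective (S i) q
    show Submodule.Quotient.mk (C.d i j x) = _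
    rw [hz]
    rfl
  d_comp_d' i j k _ _ := by
    refine ConcreteCategory.hom_ext _ _ fun q => ?_
    obtain ⟨x, rfl⟩ := Submodule.mkQ_surjective (S i) q
    have h0 : C.d j k (C.d i j x) = 0 := d_d_zero R C i j k x
    show Submodule.Quotient.mk (C.d j k (C.d i j x)) = _
    rw [h0]
    rfl

lemma quotCx_d_mk (i j : ℤ) (x : C.X i) :
    (quotCx R C S hS).d i j (Submodule.Quotient.mk x) =
      (Submodule.Quotient.mk (C.d i j x) : C.X j ⧸ S j) := rfl

/-- The quotient chain map `C ⟶ C/S`. -/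
noncomputable def quotHom : C ⟶ quotCx R C S hS where
  f i := ModuleCat.ofHom (S i).mkQ
  comm' i j _ := by
    refine ConcreteCategory.hom_ext _ _ fun x => ?_
    rfl

lemma quotHom_f (i : ℤ) (x : C.X i) :
    (quotHom R C S hS).f i x = Submodule.Quotient.mk x := rfl

lemma quotCx_acyclic (hC : Acyclic R C)
    (hlift : ∀ (i : ℤ) (x : C.X (i-1)), x ∈ S (i-1) → C.d (i-1) (i-1-1) x = 0 →
      ∃ y ∈ S i, C.d i (i-1) y = x) :
    Acyclic R (quotCx R C S hS) := by
  intro i q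
  constructor
  · intro hq
    obtain ⟨x, rfl⟩ := Submodule.mkQ_surjective (S i) q
    rw [Submodule.mkQ_apply] at hq ⊢
    rw [quotCx_d_mk] at hq
    have hmem : C.d i (i-1) x ∈ S (i-1) := (Submodule.Quotient.mk_eq_zero _).mp hq
    have hcyc : C.d (i-1) (i-1-1) (C.d i (i-1) x) = 0 := d_d_zero R C i (i-1) (i-1-1) x
    obtain ⟨y, hy, hdy⟩ := hlift i (C.d i (i-1) x) hmem hcyc
    have hxy : C.d i (i-1) (x - y) = 0 := by rw [map_sub, hdy, sub_self]
    obtain ⟨z, hz⟩ := (hC i (x - y)).mp hxy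
    refine ⟨Submodule.Quotient.mk z, ?_⟩
    rw [quotCx_d_mk, hz]
    refine (Submodule.Quotient.eq _).mpr ?_
    simpa using (S i).neg_mem hy
  · rintro ⟨z, rfl⟩
    obtain ⟨w, rfl⟩ := Submodule.mkQ_surjective (S (i+1)) z
    rw [Submodule.mkQ_apply, quotCx_d_mk, quotCx_d_mk]
    rw [d_d_zero R C (i+1) i (i-1) w]
    simp
    rfl

lemma quotCx_subsingleton_top (i : ℤ) (h : Subsingleton ((quotCx R C S hS).X i)) :
    S i = ⊤ := by
  ext x
  simp only [Submodule.mem_top, iff_true]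
  have : (Submodule.Quotient.mk x : C.X i ⧸ S i) = (Submodule.Quotient.mk 0 : C.X i ⧸ S i) :=
    @Subsingleton.elim _ h _ _
  simpa [Submodule.Quotient.mk_eq_zero] using this



/-- view a linear map as a morphism in `ModuleCat` -/
def toHom {A B : ModuleCat.{u} R} (f : ↥A →ₗ[R] ↥B) : A ⟶ B := ModuleCat.ofHom f

@[simp] lemma toHom_comp_hom {A B C : ModuleCat.{u} R} (f : ↥A →ₗ[R] ↥B) (g : B ⟶ C) :
    toHom R f ≫ g = toHom R (g.hom ∘ₗ f) := rfl

lemma fp_punit : Module.FinitePresentation R PUnit.{u+1} := by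
  refine Module.finitePresentation_of_surjective (0 : R →ₗ[R] PUnit.{u+1})
    (fun x => ⟨0, Subsingleton.elim _ _⟩) ?_
  have h : LinearMap.ker (0 : R →ₗ[R] PUnit.{u+1}) = ⊤ := by
    ext x; simp
  rw [h]
  exact Module.finite_def.mp inferInstance

variable (n : ℤ) (A : Type u) [AddCommGroup A] [Module R A]

/-- components of the disc complex -/
noncomputable def discX (i : ℤ) : ModuleCat.{u} R :=
  if n - 1 ≤ i ∧ i ≤ n then ModuleCat.of R A else ModuleCat.of R PUnit.{u+1}

lemma discX_eq_of (i : ℤ) (h : n - 1 ≤ i ∧ i ≤ n) :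
    discX R n A i = ModuleCat.of R A := if_pos h

lemma discX_eq_punit (i : ℤ) (h : ¬(n - 1 ≤ i ∧ i ≤ n)) :
    discX R n A i = ModuleCat.of R PUnit.{u+1} := if_neg h

/-- The disc complex `D^n(A)`: `A` in degrees `n` and `n-1`, identity differential. -/
noncomputable def disc : Cx R where
  X := discX R n A
  d i j :=
    if h : i = n ∧ j = n - 1 then
      eqToHom ((discX_eq_of R n A i (by omega)).trans
        (discX_eq_of R n A j (by omega)).symm)
    else 0
  shape i j hrel := by
    rw [dif_neg]
    rintro ⟨rfl, rfl⟩
    exact hrel (by simp only [ComplexShape.down_Rel]; omega)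
  d_comp_d' i j k hij hjk := by
    by_cases h1 : i = n ∧ j = n - 1
    · have h2 : ¬(j = n ∧ k = n - 1) := by omega
      rw [dif_neg h2, comp_zero]
    · rw [dif_neg h1, zero_comp]

lemma disc_d_eq (i j : ℤ) (h1 : i = n) (h2 : j = n - 1) :
    (disc R n A).d i j = eqToHom ((discX_eq_of R n A i (by omega)).trans
      (discX_eq_of R n A j (by omega)).symm) := by
  subst h1; subst h2
  exact dif_pos ⟨rfl, rfl⟩

lemma disc_d_zero (i j : ℤ) (h : ¬(i = n ∧ j = n - 1)) :
    (disc R n A).d i j = 0 := dif_neg h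

lemma disc_boundedFP (hA : Module.FinitePresentation R A) : BoundedFPCx R (disc R n A) := by
  constructor
  · intro i
    by_cases h : n - 1 ≤ i ∧ i ≤ n
    · rw [show (disc R n A).X i = ModuleCat.of R A from discX_eq_of R n A i h]
      exact hA
    · rw [show (disc R n A).X i = ModuleCat.of R PUnit.{u+1} from discX_eq_punit R n A i h]
      exact fp_punit R
  · refine ⟨n - 1, n, fun i hi => ?_⟩
    rw [show (disc R n A).X i = ModuleCat.of R PUnit.{u+1} from
      discX_eq_punit R n A i (by omega)]
    infer_instance

variable (Y : Cx R) (φ : A →ₗ[R] Y.X n)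

/-- The chain map `D^n(A) ⟶ Y` associated to `φ : A → Y_n`. -/
noncomputable def discHom : disc R n A ⟶ Y where
  f i :=
    if h : i = n then
      eqToHom (discX_eq_of R n A i (by omega)) ≫ toHom R φ ≫
        eqToHom (congrArg Y.X h.symm)
    else if h' : i = n - 1 then
      eqToHom (discX_eq_of R n A i (by omega)) ≫ toHom R ((Y.d n (n-1)).hom ∘ₗ φ) ≫
        eqToHom (congrArg Y.X h'.symm)
    else 0
  comm' i j hrel := by
    have hj : j = i - 1 := by
      simp only [ComplexShape.down_Rel] at hrel; omega
    subst hj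
    dsimp only
    by_cases hi : i = n
    · subst hi
      rw [dif_pos rfl, dif_neg (show ¬(i - 1 = i) by omega), dif_pos rfl,
        disc_d_eq R i A i (i-1) rfl rfl]
      simp only [eqToHom_refl, Category.comp_id, Category.assoc, eqToHom_trans_assoc]
      erw [eqToHom_trans_assoc]
      rfl
    · by_cases hi' : i = n - 1
      · subst hi'
        rw [dif_neg hi, dif_pos rfl, dif_neg (show ¬(n - 1 - 1 = n) by omega),
          dif_neg (show ¬(n - 1 - 1 = n - 1) by omega),
          disc_d_zero R n A (n-1) (n-1-1) (by omega), zero_comp]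
        have hz : @toHom R _ (ModuleCat.of R A) (Y.X (n-1)) ((Y.d n (n-1)).hom ∘ₗ φ) ≫
            Y.d (n-1) (n-1-1) = 0 := by
          refine ConcreteCategory.hom_ext _ _ fun a => ?_
          exact d_d_zero R Y n (n-1) (n-1-1) (φ a)
        simp only [eqToHom_refl, Category.comp_id, Category.assoc]
        rw [hz]
        simp
      · rw [dif_neg hi, dif_neg hi',
          disc_d_zero R n A i (i-1) (fun hc => hi hc.1), zero_comp, zero_comp]

lemma discHom_f_n :
    (discHom R n A Y φ).f n =
      eqToHom (discX_eq_of R n A n (by omega)) ≫ toHom R φ := by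
  dsimp only [discHom]
  rw [dif_pos rfl]
  simp
  rfl

/-- Degreewise purity (surjectivity form) extracted from purity in the category of
complexes, by testing against disc complexes. -/
lemma surj_of_cxPure {P Mc Nc : Cx R} {ι : P ⟶ Mc} {π : Mc ⟶ Nc}
    (hp : CxPure R ι π) (i : ℤ)
    (hA : Module.FinitePresentation R A) (ψ : A →ₗ[R] Nc.X i) :
    ∃ χ : A →ₗ[R] Mc.X i, (π.f i).hom ∘ₗ χ = ψ := by
  obtain ⟨H, hH⟩ := (hp (disc R i A) (disc_boundedFP R i A hA)).2.2 (discHom R i A Nc ψ)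
  have hH' : H ≫ π = discHom R i A Nc ψ := hH
  refine ⟨(show ModuleCat.of R A ⟶ Mc.X i from
    eqToHom (discX_eq_of R i A i (by omega)).symm ≫ H.f i).hom, ?_⟩
  have h1 : H.f i ≫ π.f i = (discHom R i A Nc ψ).f i := by
    rw [← HomologicalComplex.comp_f, hH']
  show (((eqToHom (discX_eq_of R i A i (by omega)).symm : ModuleCat.of R A ⟶ (disc R i A).X i) ≫
    H.f i) ≫ π.f i).hom = (toHom R ψ).hom
  rw [Category.assoc, h1, discHom_f_n]
  erw [eqToHom_trans_assoc]
  simp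



lemma hom_comp_apply {A B C : ModuleCat.{u} R} (f : A ⟶ B) (g : B ⟶ C) (x : A) :
    (f ≫ g) x = g (f x) := rfl

lemma iota_pi_zero {P M N : Cx R} (ι : P ⟶ M) (π : M ⟶ N) (hses : CxSES R ι π)
    (i : ℤ) (x : P.X i) : π.f i (ι.f i x) = 0 :=
  ((hses i).2.2 (ι.f i x)).mpr ⟨x, rfl⟩

/-- Lemma F: a degreewise short exact sequence of complexes which is degreewise pure and
has pure-acyclic kernel is pure in the category of complexes. -/
lemma cxPure_of_dwPure_of_pureAcyclic {P M N : Cx R} (ι : P ⟶ M) (π : M ⟶ N)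
    (hses : CxSES R ι π)
    (hdw : ∀ (i : ℤ) (A : Type u) [AddCommGroup A] [Module R A],
      Module.FinitePresentation R A → ∀ ψ : A →ₗ[R] N.X i,
        ∃ χ : A →ₗ[R] M.X i, (ConcreteCategory.hom (C := ModuleCat R) (π.f i)) ∘ₗ χ = ψ)
    (hpa : PureAcyclic R P) : CxPure R ι π := by
  intro B hB
  obtain ⟨hBfp, a, b, hbound⟩ := hB
  have hmodses : ∀ i : ℤ, ModSES R (ConcreteCategory.hom (C := ModuleCat R) (ι.f i)) (ConcreteCategory.hom (C := ModuleCat R) (π.f i)) :=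
    fun i => ⟨(hses i).1, (hses i).2.1, (hses i).2.2⟩
  refine ⟨?_, ?_, ?_⟩
  · -- injectivity
    intro h₁ h₂ hh
    apply HomologicalComplex.Hom.ext
    funext i
    refine ConcreteCategory.hom_ext _ _ fun x => ?_
    apply (hses i).1
    have h0 := congrArg (fun (q : B ⟶ M) => q.f i x) hh
    simpa only [HomologicalComplex.comp_f, hom_comp_apply] using h0
  · -- exactness in the middle
    intro h
    constructor
    · intro hz
      have hfac : ∀ i : ℤ, ∃ e : B.X i →ₗ[R] P.X i,
          (ConcreteCategory.hom (C := ModuleCat R) (ι.f i)) ∘ₗ e = ConcreteCategory.hom (C := ModuleCat R) (h.f i) := by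
        intro i
        refine exists_factor_of_comp_zero R (hmodses i) (ConcreteCategory.hom (C := ModuleCat R) (h.f i)) ?_
        refine LinearMap.ext fun x => ?_
        have h0 := congrArg (fun (q : B ⟶ N) => q.f i x) hz
        exact h0
      choose e he using hfac
      refine ⟨{ f := fun i => ModuleCat.ofHom (e i), comm' := ?_ }, ?_⟩
      · intro i j _
        refine ConcreteCategory.hom_ext _ _ fun x => ?_
        apply (hses j).1
        have h1 : ι.f j ((e j) ((B.d i j) x)) = h.f j (B.d i j x) :=
          LinearMap.congr_fun (he j) _
        have h2 : M.d i j (ι.f i (e i x)) = ι.f j (P.d i j (e i x)) :=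
          ConcreteCategory.congr_hom (ι.comm i j) (e i x)
        have h3 : ι.f i (e i x) = h.f i x := LinearMap.congr_fun (he i) x
        have h4 : M.d i j (h.f i x) = h.f j (B.d i j x) :=
          ConcreteCategory.congr_hom (h.comm i j) x
        show ι.f j ((ModuleCat.ofHom (e i) ≫ P.d i j) x) = ι.f j ((B.d i j ≫ ModuleCat.ofHom (e j)) x)
        calc ι.f j (P.d i j (e i x)) = M.d i j (ι.f i (e i x)) := h2.symm
          _ = M.d i j (h.f i x) := by rw [h3]
          _ = h.f j (B.d i j x) := h4
          _ = ι.f j (e j (B.d i j x)) := h1.symm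
      · apply HomologicalComplex.Hom.ext
        funext i
        exact ModuleCat.hom_ext (he i)
    · rintro ⟨e, rfl⟩
      apply HomologicalComplex.Hom.ext
      funext i
      refine ConcreteCategory.hom_ext _ _ fun x => ?_
      show π.f i (ι.f i (e.f i x)) = 0
      exact iota_pi_zero R ι π hses i _
  · -- surjectivity
    intro k
    have hg : ∀ i : ℤ, ∃ g : B.X i →ₗ[R] M.X i,
        (ConcreteCategory.hom (C := ModuleCat R) (π.f i)) ∘ₗ g = ConcreteCategory.hom (C := ModuleCat R) (k.f i) :=
      fun i => hdw i (B.X i) (hBfp i) (ConcreteCategory.hom (C := ModuleCat R) (k.f i))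
    choose g hgspec using hg
    set δ : ∀ i : ℤ, (B.X i →ₗ[R] M.X (i-1)) :=
      fun i => (g (i-1) ∘ₗ (ConcreteCategory.hom (C := ModuleCat R) (B.d i (i-1))))
        - ((ConcreteCategory.hom (C := ModuleCat R) (M.d i (i-1))) ∘ₗ g i) with hδ
    have hπδ : ∀ (i : ℤ) (x : B.X i), π.f (i-1) (δ i x) = 0 := by
      intro i x
      have h1 : π.f (i-1) (g (i-1) (B.d i (i-1) x)) = k.f (i-1) (B.d i (i-1) x) :=
        LinearMap.congr_fun (hgspec (i-1)) _
      have h2 : π.f (i-1) (M.d i (i-1) (g i x)) = N.d i (i-1) (π.f i (g i x)) :=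
        (ConcreteCategory.congr_hom (π.comm i (i-1)) (g i x)).symm
      have h3 : π.f i (g i x) = k.f i x := LinearMap.congr_fun (hgspec i) x
      have h5 : N.d i (i-1) (k.f i x) = k.f (i-1) (B.d i (i-1) x) :=
        ConcreteCategory.congr_hom (k.comm i (i-1)) x
      simp only [hδ, LinearMap.sub_apply, LinearMap.comp_apply, map_sub]
      rw [h1, h2, h3, h5, sub_self]
    have hδ'ex : ∀ i : ℤ, ∃ δ' : B.X i →ₗ[R] P.X (i-1),
        (ConcreteCategory.hom (C := ModuleCat R) (ι.f (i-1))) ∘ₗ δ' = δ i := by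
      intro i
      exact exists_factor_of_comp_zero R (hmodses (i-1)) (δ i)
        (LinearMap.ext fun x => hπδ i x)
    choose δ' hδ'spec using hδ'ex
    have hιδ' : ∀ (i : ℤ) (x : B.X i), ι.f (i-1) (δ' i x) = δ i x :=
      fun i x => LinearMap.congr_fun (hδ'spec i) x
    have hdδ : ∀ (i : ℤ) (x : B.X i),
        M.d (i-1) (i-1-1) (δ i x) = - δ (i-1) (B.d i (i-1) x) := by
      intro i x
      simp only [hδ, LinearMap.sub_apply, LinearMap.comp_apply, map_sub]
      rw [d_d_zero R M i (i-1) (i-1-1) (g i x)]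
      rw [d_d_zero R B i (i-1) (i-1-1) x, map_zero]
      abel
    have hdδ' : ∀ (i : ℤ) (x : B.X i),
        P.d (i-1) (i-1-1) (δ' i x) = - δ' (i-1) (B.d i (i-1) x) := by
      intro i x
      apply (hses (i-1-1)).1
      have h1 : M.d (i-1) (i-1-1) (ι.f (i-1) (δ' i x)) =
          ι.f (i-1-1) (P.d (i-1) (i-1-1) (δ' i x)) :=
        ConcreteCategory.congr_hom (ι.comm (i-1) (i-1-1)) (δ' i x)
      rw [← h1, hιδ', hdδ, map_neg, hιδ']
    -- build the homotopy correction by recursion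
    have hrec : ∀ n : ℕ, ∃ τ : ∀ j : ℤ, B.X j →ₗ[R] P.X j,
        ∀ i : ℤ, i < a + n → ∀ x : B.X i,
          P.d i (i-1) (τ i x) = τ (i-1) (B.d i (i-1) x) - δ' i x := by
      intro n
      induction n with
      | zero =>
        refine ⟨fun _ => 0, fun i hi x => ?_⟩
        have hia : i < a := by omega
        have hsing : Subsingleton (B.X i) := hbound i (Or.inl hia)
        have hx : x = 0 := Subsingleton.elim x 0
        subst hx
        simp
      | succ n ih =>
        obtain ⟨τ, hτ⟩ := ih
        set c : ℤ := a + n with hc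
        have hν : ∀ x : B.X c,
            P.d (c-1) (c-1-1) (((τ (c-1) ∘ₗ (ConcreteCategory.hom (C := ModuleCat R) (B.d c (c-1))))
              - δ' c) x) = 0 := by
          intro x
          simp only [LinearMap.sub_apply, LinearMap.comp_apply, map_sub]
          rw [hτ (c-1) (by omega) (B.d c (c-1) x)]
          rw [hdδ' c x]
          rw [d_d_zero R B c (c-1) (c-1-1) x, map_zero]
          abel
        obtain ⟨t, ht⟩ := pureAcyclic_lift R P hpa c (c-1) (by ring) (B.X c) (hBfp c)
          ((τ (c-1) ∘ₗ (ConcreteCategory.hom (C := ModuleCat R) (B.d c (c-1)))) - δ' c) hν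
        refine ⟨fun j => if hj : j = c then hj ▸ t else τ j, ?_⟩
        intro i hi x
        by_cases hic : i = c
        · subst hic
          beta_reduce
          rw [dif_pos rfl, dif_neg (show ¬(c - 1 = c) by omega)]
          exact ht x
        · beta_reduce
          rw [dif_neg hic, dif_neg (show ¬(i - 1 = c) by omega)]
          exact hτ i (by omega) x
    obtain ⟨τ, hτ⟩ := hrec ((b + 2 - a).toNat)
    have hEall : ∀ (i : ℤ) (x : B.X i),
        P.d i (i-1) (τ i x) = τ (i-1) (B.d i (i-1) x) - δ' i x := by
      intro i x
      by_cases hi : i < a + ((b + 2 - a).toNat : ℤ)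
      · exact hτ i hi x
      · have hle := Int.self_le_toNat (b + 2 - a)
        have hsing : Subsingleton (B.X i) := hbound i (Or.inr (by omega))
        have hx : x = 0 := Subsingleton.elim x 0
        subst hx
        simp
    refine ⟨{ f := fun i => ModuleCat.ofHom (g i - (ConcreteCategory.hom (C := ModuleCat R) (ι.f i)) ∘ₗ τ i), comm' := ?_ }, ?_⟩
    · intro i j hrel
      have hj : j = i - 1 := by
        simp only [ComplexShape.down_Rel] at hrel; omega
      subst hj
      refine ConcreteCategory.hom_ext _ _ fun x => ?_
      show M.d i (i-1) ((g i - (ConcreteCategory.hom (C := ModuleCat R) (ι.f i)) ∘ₗ τ i) x) =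
        (g (i-1) - (ConcreteCategory.hom (C := ModuleCat R) (ι.f (i-1))) ∘ₗ τ (i-1)) (B.d i (i-1) x)
      have hA1 : M.d i (i-1) (g i x) = g (i-1) (B.d i (i-1) x) - δ i x := by
        have hh : δ i x = g (i-1) (B.d i (i-1) x) - M.d i (i-1) (g i x) := rfl
        rw [hh]
        abel
      have hA2 : M.d i (i-1) (ι.f i (τ i x)) = ι.f (i-1) (P.d i (i-1) (τ i x)) :=
        ConcreteCategory.congr_hom (ι.comm i (i-1)) (τ i x)
      simp only [LinearMap.sub_apply, LinearMap.comp_apply, map_sub]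
      rw [hA1, hA2, hEall i x, map_sub, hιδ']
      abel
    · show _ = k
      apply HomologicalComplex.Hom.ext
      funext i
      refine ConcreteCategory.hom_ext _ _ fun x => ?_
      show π.f i ((g i - (ConcreteCategory.hom (C := ModuleCat R) (ι.f i)) ∘ₗ τ i) x) = k.f i x
      simp only [LinearMap.sub_apply, LinearMap.comp_apply, map_sub]
      rw [iota_pi_zero R ι π hses i (τ i x), sub_zero]
      exact LinearMap.congr_fun (hgspec i) x



lemma vnr_homExact (hv : VonNeumannRegular R) {L M N : Type u}
    [AddCommGroup L] [AddCommGroup M] [AddCommGroup N]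
    [Module R L] [Module R M] [Module R N]
    (f : L →ₗ[R] M) (g : M →ₗ[R] N) (hses : ModSES R f g) : HomExact R f g :=
  hv N L M f g hses

/-- Over a von Neumann regular ring, a pure-minimal complex has no nonzero acyclic
subcomplexes. -/
lemma part2_forward (hv : VonNeumannRegular R) (M : Cx R) (hmin : PureMinimal R M)
    (A : Cx R) (ι : A ⟶ M) (hinj : ∀ i, Function.Injective (ι.f i))
    (hA : Acyclic R A) : IsZero A := by
  have hclosed : Closed R M (fun i => LinearMap.range (ConcreteCategory.hom (C := ModuleCat R) (ι.f i))) := by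
    rintro i x ⟨y, rfl⟩
    exact ⟨A.d i (i-1) y, (ConcreteCategory.congr_hom (ι.comm i (i-1)) y).symm⟩
  set Q := quotCx R M _ hclosed with hQ
  set π := quotHom R M _ hclosed with hπ
  have hses : CxSES R ι π := by
    intro i
    refine ⟨hinj i, Submodule.mkQ_surjective _, ?_⟩
    intro x
    rw [show (π.f i x = 0) ↔ (Submodule.Quotient.mk x = (0 : M.X i ⧸
      LinearMap.range (ConcreteCategory.hom (C := ModuleCat R) (ι.f i)))) from Iff.rfl]
    rw [Submodule.Quotient.mk_eq_zero]
    exact Iff.rfl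
  have hpa : PureAcyclic R A := pureAcyclic_of_vnr R hv A hA
  have hdw : ∀ (i : ℤ) (B : Type u) [AddCommGroup B] [Module R B],
      Module.FinitePresentation R B → ∀ ψ : B →ₗ[R] Q.X i,
        ∃ χ : B →ₗ[R] M.X i, (ConcreteCategory.hom (C := ModuleCat R) (π.f i)) ∘ₗ χ = ψ := by
    intro i B _ _ hB ψ
    have hx := vnr_homExact R hv (ConcreteCategory.hom (C := ModuleCat R) (ι.f i))
      (ConcreteCategory.hom (C := ModuleCat R) (π.f i)) ⟨(hses i).1, (hses i).2.1, (hses i).2.2⟩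
    obtain ⟨χ, hχ⟩ := (hx B hB).2.2 ψ
    exact ⟨χ, hχ⟩
  exact hmin A Q ι π hses (cxPure_of_dwPure_of_pureAcyclic R ι π hses hdw hpa) hpa

lemma part1_forward (hv : VonNeumannRegular R) (M : Cx R) (hac : Acyclic R M)
    (hmin : PureMinimal R M) : IsZero M := by
  refine part2_forward R hv M hmin M (𝟙 M) (fun i => ?_) hac
  intro x y hxy
  simpa using hxy

lemma pureMinimal_of_onlyZeroAcyclicSub (M : Cx R)
    (h : ∀ (A : Cx R) (ι : A ⟶ M), (∀ i, Function.Injective (ι.f i)) →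
      Acyclic R A → IsZero A) : PureMinimal R M :=
  fun P _Q ι _π hses _hpure hpa =>
    h P ι (fun i => (hses i).1) (acyclic_of_pureAcyclic R P hpa)



lemma exists_factor_into_range {Lm Mn A : Type u} [AddCommGroup Lm] [AddCommGroup Mn]
    [AddCommGroup A] [Module R Lm] [Module R Mn] [Module R A]
    (f : Lm →ₗ[R] Mn) (hinj : Function.Injective f) (h : A →ₗ[R] Mn)
    (hmem : ∀ a, h a ∈ LinearMap.range f) : ∃ e : A →ₗ[R] Lm, f ∘ₗ e = h := by
  refine ⟨(LinearEquiv.ofInjective f hinj).symm.toLinearMap ∘ₗ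
    (h.codRestrict (LinearMap.range f) hmem), ?_⟩
  ext a
  have h0 : f ((LinearEquiv.ofInjective f hinj).symm
      (h.codRestrict (LinearMap.range f) hmem a)) =
      ((LinearEquiv.ofInjective f hinj)
        ((LinearEquiv.ofInjective f hinj).symm
          (h.codRestrict (LinearMap.range f) hmem a)) : Mn) := rfl
  simp only [LinearMap.coe_comp, Function.comp_apply, LinearEquiv.coe_coe]
  rw [h0, LinearEquiv.apply_symm_apply]
  rfl

variable (C : Cx R)

/-- degreewise purity of a family of submodules -/
def GoodDW (S : ∀ i, Submodule R (C.X i)) : Prop :=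
  ∀ (i : ℤ) (A : Type u) [AddCommGroup A] [Module R A], Module.FinitePresentation R A →
    ∀ φ : A →ₗ[R] (↥(C.X i) ⧸ S i), ∃ ψ : A →ₗ[R] C.X i, (S i).mkQ ∘ₗ ψ = φ

/-- relative pure acyclicity of a family of submodules -/
def GoodPA (S : ∀ i, Submodule R (C.X i)) : Prop :=
  ∀ (i : ℤ) (A : Type u) [AddCommGroup A] [Module R A], Module.FinitePresentation R A →
    ∀ φ : A →ₗ[R] C.X (i-1), (∀ a, φ a ∈ S (i-1)) →
      (∀ a, C.d (i-1) (i-1-1) (φ a) = 0) →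
      ∃ ψ : A →ₗ[R] C.X i, (∀ a, ψ a ∈ S i) ∧ ∀ a, C.d i (i-1) (ψ a) = φ a

def Good (S : ∀ i, Submodule R (C.X i)) : Prop :=
  Closed R C S ∧ GoodDW R C S ∧ GoodPA R C S

lemma goodPA_elem {S : ∀ i, Submodule R (C.X i)} (hg : GoodPA R C S) (i : ℤ)
    (x : C.X (i-1)) (hx : x ∈ S (i-1)) (hc : C.d (i-1) (i-1-1) x = 0) :
    ∃ y ∈ S i, C.d i (i-1) y = x := by
  obtain ⟨ψ, hmem, hd⟩ := hg i R inferInstance (LinearMap.toSpanSingleton R _ x)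
    (fun a => by
      rw [LinearMap.toSpanSingleton_apply]
      exact Submodule.smul_mem _ a hx)
    (fun a => by
      rw [LinearMap.toSpanSingleton_apply, map_smul, hc, smul_zero])
  refine ⟨ψ 1, hmem 1, ?_⟩
  rw [hd 1, LinearMap.toSpanSingleton_apply, one_smul]

lemma good_bot : Good R C (fun _ => ⊥) := by
  refine ⟨fun i x hx => by simp at hx; simp [hx], ?_, ?_⟩
  · intro i A _ _ _ φ
    refine ⟨(Submodule.quotEquivOfEqBot (⊥ : Submodule R (C.X i)) rfl).toLinearMap ∘ₗ φ, ?_⟩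
    refine LinearMap.ext fun a => ?_
    obtain ⟨x, hx⟩ := Submodule.mkQ_surjective (⊥ : Submodule R (C.X i)) (φ a)
    simp only [LinearMap.comp_apply, LinearEquiv.coe_toLinearMap]
    rw [← hx, Submodule.mkQ_apply, Submodule.mkQ_apply, Submodule.quotEquivOfEqBot_apply_mk]
  · intro i A _ _ _ φ hφ _
    refine ⟨0, fun a => Submodule.zero_mem _, fun a => ?_⟩
    have : φ a = 0 := (Submodule.mem_bot R).mp (hφ a)
    simp [this]

lemma chain_common_mem {c : Set (∀ i, Submodule R (C.X i))} (hchain : IsChain (· ≤ ·) c)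
    (hne : c.Nonempty) (i : ℤ) (l : List (C.X i)) (hl : ∀ x ∈ l, ∃ s ∈ c, x ∈ s i) :
    ∃ s ∈ c, ∀ x ∈ l, x ∈ s i := by
  induction l with
  | nil => exact ⟨hne.choose, hne.choose_spec, fun x hx => absurd hx List.not_mem_nil⟩
  | cons x xs ih =>
    obtain ⟨s₁, hs₁c, hs₁⟩ := hl x List.mem_cons_self
    obtain ⟨s₂, hs₂c, hs₂⟩ := ih (fun y hy => hl y (List.mem_cons_of_mem x hy))
    rcases eq_or_ne s₁ s₂ with rfl | hne'
    · exact ⟨s₁, hs₁c, fun y hy => by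
        rcases List.mem_cons.mp hy with rfl | hy'
        · exact hs₁
        · exact hs₂ y hy'⟩
    · rcases hchain hs₁c hs₂c hne' with h | h
      · exact ⟨s₂, hs₂c, fun y hy => by
          rcases List.mem_cons.mp hy with rfl | hy'
          · exact h i hs₁
          · exact hs₂ y hy'⟩
      · exact ⟨s₁, hs₁c, fun y hy => by
          rcases List.mem_cons.mp hy with rfl | hy'
          · exact hs₁
          · exact h i (hs₂ y hy')⟩

lemma chain_good_ub {c : Set (∀ i, Submodule R (C.X i))} (hsub : ∀ s ∈ c, Good R C s)
    (hchain : IsChain (· ≤ ·) c) (hne : c.Nonempty) :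
    Good R C (fun i => ⨆ (s : c), (s : ∀ i, Submodule R (C.X i)) i) := by
  haveI : Nonempty c := hne.to_subtype
  have hdir : ∀ i : ℤ, Directed (· ≤ ·) (fun (s : c) => (s : ∀ i, Submodule R (C.X i)) i) := by
    intro i s t
    rcases eq_or_ne s.1 t.1 with h | h
    · exact ⟨t, le_of_eq (congrFun h i), le_refl _⟩
    · rcases hchain s.2 t.2 h with h' | h'
      · exact ⟨t, h' i, le_refl _⟩
      · exact ⟨s, le_refl _, h' i⟩
  have hmem : ∀ (i : ℤ) (x : C.X i),
      (x ∈ ⨆ (s : c), (s : ∀ i, Submodule R (C.X i)) i) ↔ ∃ s ∈ c, x ∈ s i := by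
    intro i x
    rw [Submodule.mem_iSup_of_directed _ (hdir i)]
    constructor
    · rintro ⟨s, hs⟩; exact ⟨s.1, s.2, hs⟩
    · rintro ⟨s, hsc, hs⟩; exact ⟨⟨s, hsc⟩, hs⟩
  have hle : ∀ (s) (_ : s ∈ c) (i : ℤ),
      s i ≤ ⨆ (t : c), (t : ∀ i, Submodule R (C.X i)) i :=
    fun s hs i => le_iSup (fun (t : c) => (t : ∀ i, Submodule R (C.X i)) i) ⟨s, hs⟩
  refine ⟨?_, ?_, ?_⟩
  · -- closed
    intro i x hx
    obtain ⟨s, hsc, hs⟩ := (hmem i x).mp hx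
    exact (hmem (i-1) _).mpr ⟨s, hsc, (hsub s hsc).1 i x hs⟩
  · -- degreewise pure
    intro i A _ _ hA φ
    haveI := hA
    obtain ⟨L0, iL1, iL2, K, e, hfree, hfin, hKfg⟩ : ∃ (L : Type u) (_ : AddCommGroup L)
        (_ : Module R L) (K : Submodule R L) (_ : A ≃ₗ[R] L ⧸ K),
        Module.Free R L ∧ Module.Finite R L ∧ K.FG :=
      Module.FinitePresentation.equiv_quotient R A
    letI := iL1; letI := iL2; letI := hfree; letI := hfin
    set U : Submodule R (C.X i) := ⨆ (s : c), (s : ∀ i, Submodule R (C.X i)) i with hU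
    set Φ : L0 →ₗ[R] (↥(C.X i) ⧸ U) := φ ∘ₗ (e.symm.toLinearMap ∘ₗ K.mkQ) with hΦ
    set b := Module.Free.chooseBasis R L0 with hb
    have hw : ∀ β, ∃ y : C.X i, U.mkQ y = Φ (b β) :=
      fun β => Submodule.mkQ_surjective U (Φ (b β))
    choose w hwspec using hw
    set F : L0 →ₗ[R] C.X i := b.constr ℕ w with hF
    have hmkF : ∀ v : L0, U.mkQ (F v) = Φ v := by
      intro v
      have h0 : U.mkQ ∘ₗ F = Φ := by
        refine b.ext fun β => ?_
        simp only [LinearMap.comp_apply, hF, Module.Basis.constr_basis]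
        exact hwspec β
      exact LinearMap.congr_fun h0 v
    obtain ⟨G, hG⟩ := hKfg
    have hFG : ∀ x ∈ G.toList.map F, ∃ s ∈ c, x ∈ s i := by
      intro x hx
      obtain ⟨k, hkG, rfl⟩ := List.mem_map.mp hx
      have hkK : k ∈ K := by
        rw [← hG]; exact Submodule.subset_span (Finset.mem_toList.mp hkG)
      have h1 : Φ k = 0 := by
        rw [hΦ]
        simp only [LinearMap.comp_apply, LinearEquiv.coe_toLinearMap]
        rw [Submodule.mkQ_apply, (Submodule.Quotient.mk_eq_zero K).mpr hkK]
        simp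
      have h2 : U.mkQ (F k) = 0 := by rw [hmkF k, h1]
      rw [Submodule.mkQ_apply, Submodule.Quotient.mk_eq_zero] at h2
      exact (hmem i (F k)).mp h2
    obtain ⟨s₀, hs₀c, hs₀⟩ := chain_common_mem R C hchain hne i (G.toList.map F) hFG
    have hKle : K ≤ Submodule.comap F (s₀ i) := by
      rw [← hG, Submodule.span_le]
      intro k hk
      exact hs₀ (F k) (List.mem_map.mpr ⟨k, Finset.mem_toList.mpr hk, rfl⟩)
    set Fbar : (L0 ⧸ K) →ₗ[R] (↥(C.X i) ⧸ s₀ i) := Submodule.mapQ K (s₀ i) F hKle with hFbar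
    obtain ⟨ψ, hψ⟩ := (hsub s₀ hs₀c).2.1 i A hA (Fbar ∘ₗ e.toLinearMap)
    refine ⟨ψ, ?_⟩
    refine LinearMap.ext fun a => ?_
    show U.mkQ (ψ a) = φ a
    obtain ⟨v, hv⟩ := Submodule.mkQ_surjective K (e a)
    have c1 : ψ a - F v ∈ s₀ i := by
      have h3 := LinearMap.congr_fun hψ a
      have h4 : (Fbar ∘ₗ e.toLinearMap) a = (s₀ i).mkQ (F v) := by
        simp only [LinearMap.comp_apply, LinearEquiv.coe_toLinearMap]
        rw [← hv]
        rfl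
      have h5 : (s₀ i).mkQ (ψ a) = (s₀ i).mkQ (F v) := by rw [← h4, ← h3]; rfl
      rw [Submodule.mkQ_apply, Submodule.mkQ_apply, Submodule.Quotient.eq] at h5
      exact h5
    have c2 : U.mkQ (F v) = φ a := by
      rw [hmkF v, hΦ]
      simp only [LinearMap.comp_apply, LinearEquiv.coe_toLinearMap]
      rw [hv, LinearEquiv.symm_apply_apply]
    have c3 : U.mkQ (ψ a - F v) = 0 := by
      rw [Submodule.mkQ_apply, Submodule.Quotient.mk_eq_zero]
      exact hle s₀ hs₀c i c1
    calc U.mkQ (ψ a) = U.mkQ (F v) + U.mkQ (ψ a - F v) := by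
          rw [← map_add]; congr 1; abel
      _ = φ a := by rw [c2, c3, add_zero]
  · -- pure acyclicity
    intro i A _ _ hA φ hφ hcyc
    haveI := hA
    obtain ⟨t, ht⟩ := Module.Finite.fg_top (R := R) (M := A)
    have hgen : ∀ x ∈ t.toList.map φ, ∃ s ∈ c, x ∈ s (i-1) := by
      intro x hx
      obtain ⟨a, _, rfl⟩ := List.mem_map.mp hx
      exact (hmem (i-1) (φ a)).mp (hφ a)
    obtain ⟨s₀, hs₀c, hs₀⟩ := chain_common_mem R C hchain hne (i-1) (t.toList.map φ) hgen
    have hφs₀ : ∀ a, φ a ∈ s₀ (i-1) := by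
      intro a
      have hsub' : Submodule.span R (t : Set A) ≤ Submodule.comap φ (s₀ (i-1)) := by
        rw [Submodule.span_le]
        intro z hz
        exact hs₀ (φ z) (List.mem_map.mpr ⟨z, Finset.mem_toList.mpr hz, rfl⟩)
      rw [ht] at hsub'
      exact hsub' (Submodule.mem_top)
    obtain ⟨ψ, hψmem, hψd⟩ := (hsub s₀ hs₀c).2.2 i A hA φ hφs₀ hcyc
    exact ⟨ψ, fun a => (hmem i (ψ a)).mpr ⟨s₀, hs₀c, hψmem a⟩, hψd⟩



lemma isZero_of_components {P' : Cx R} (h : ∀ i, ∀ x : P'.X i, x = 0) : IsZero P' := by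
  rw [IsZero.iff_id_eq_zero]
  apply HomologicalComplex.Hom.ext
  funext i
  refine ConcreteCategory.hom_ext _ _ fun x => ?_
  show x = 0
  exact h i x

lemma quot_pureMinimal (C : Cx R) (Sm : ∀ i, Submodule R (C.X i))
    (hmax : Maximal (Good R C) Sm) :
    PureMinimal R (quotCx R C Sm hmax.1.1) := by
  have hclosed : Closed R C Sm := hmax.1.1
  have hdw : GoodDW R C Sm := hmax.1.2.1
  have hpa : GoodPA R C Sm := hmax.1.2.2
  have hmaxi := hmax.2
  show PureMinimal R (quotCx R C Sm hclosed)
  set Q := quotCx R C Sm hclosed with hQdef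
  intro P' Q'' ι' π' hses' hpure' hpa'
  set T : ∀ i, Submodule R (↥(C.X i) ⧸ Sm i) :=
    fun i => LinearMap.range (ConcreteCategory.hom (C := ModuleCat R) (ι'.f i)) with hTdef
  set S' : ∀ i, Submodule R (C.X i) := fun i => Submodule.comap ((Sm i).mkQ) (T i) with hS'def
  have hSmle : ∀ i, Sm i ≤ S' i := by
    intro i x hx
    show (Sm i).mkQ x ∈ T i
    rw [Submodule.mkQ_apply, (Submodule.Quotient.mk_eq_zero _).mpr hx]
    exact Submodule.zero_mem _
  have hmemS' : ∀ (i : ℤ) (x : C.X i), x ∈ S' i ↔ (Sm i).mkQ x ∈ T i := fun i x => Iff.rfl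
  have hTd : ∀ (i : ℤ) (q : Q.X i), q ∈ T i → Q.d i (i-1) q ∈ T (i-1) := by
    rintro i q ⟨y, rfl⟩
    exact ⟨P'.d i (i-1) y, (ConcreteCategory.congr_hom (ι'.comm i (i-1)) y).symm⟩
  have hπ'ker : ∀ (i : ℤ) (q : Q.X i), π'.f i q = 0 ↔ q ∈ T i := by
    intro i q
    rw [(hses' i).2.2 q]
    exact ⟨fun ⟨y, hy⟩ => ⟨y, hy⟩, fun ⟨y, hy⟩ => ⟨y, hy⟩⟩
  -- S' is good
  have hS'closed : Closed R C S' := by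
    intro i x hx
    show (Sm (i-1)).mkQ (C.d i (i-1) x) ∈ T (i-1)
    rw [Submodule.mkQ_apply, ← quotCx_d_mk R C Sm hclosed i (i-1) x]
    exact hTd i (Submodule.Quotient.mk x) hx
  have hS'dw : GoodDW R C S' := by
    intro i A _ _ hA φ
    set ρ : (↥(C.X i) ⧸ S' i) →ₗ[R] Q''.X i :=
      Submodule.liftQ (S' i) (ConcreteCategory.hom (C := ModuleCat R) ((π'.f i)) ∘ₗ (Sm i).mkQ)
        (by
          intro x hx
          rw [LinearMap.mem_ker]
          exact (hπ'ker i _).mpr hx) with hρdef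
    have hρmk : ∀ x : C.X i, ρ (Submodule.Quotient.mk x) = π'.f i ((Sm i).mkQ x) := by
      intro x; rfl
    have hρinj : Function.Injective ρ := by
      intro q₁ q₂ hq
      obtain ⟨x₁, rfl⟩ := Submodule.mkQ_surjective (S' i) q₁
      obtain ⟨x₂, rfl⟩ := Submodule.mkQ_surjective (S' i) q₂
      rw [Submodule.mkQ_apply, Submodule.mkQ_apply] at hq ⊢
      rw [hρmk, hρmk] at hq
      rw [Submodule.Quotient.eq]
      have h0 : π'.f i ((Sm i).mkQ (x₁ - x₂)) = 0 := by
        erw [map_sub, map_sub, hq, sub_self]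
      exact (hπ'ker i _).mp h0
    obtain ⟨χ, hχ⟩ := surj_of_cxPure R A hpure' i hA (ρ ∘ₗ φ)
    obtain ⟨ψ, hψ⟩ := hdw i A hA χ
    refine ⟨ψ, LinearMap.ext fun a => ?_⟩
    apply hρinj
    show ρ (Submodule.Quotient.mk (ψ a)) = ρ (φ a)
    rw [hρmk]
    have h1 : (Sm i).mkQ (ψ a) = χ a := LinearMap.congr_fun hψ a
    have h2 : π'.f i (χ a) = ρ (φ a) := LinearMap.congr_fun hχ a
    rw [h1, h2]
  have hS'pa : GoodPA R C S' := by
    intro i A _ _ hA φ hφ hcyc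
    set φbar : A →ₗ[R] Q.X (i-1) := (Sm (i-1)).mkQ ∘ₗ φ with hφbar
    have hφbarT : ∀ a, φbar a ∈ T (i-1) := fun a => hφ a
    have hφbarcyc : ∀ a, Q.d (i-1) (i-1-1) (φbar a) = 0 := by
      intro a
      show Q.d (i-1) (i-1-1) (Submodule.Quotient.mk (φ a)) = 0
      rw [quotCx_d_mk, hcyc a]
      simp
      rfl
    obtain ⟨ft, hft⟩ := exists_factor_into_range R (ConcreteCategory.hom (C := ModuleCat R) (ι'.f (i-1)))
      (hses' (i-1)).1 φbar hφbarT
    have hftap : ∀ a, ι'.f (i-1) (ft a) = φbar a := fun a => LinearMap.congr_fun hft a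
    have hftcyc : ∀ a, P'.d (i-1) (i-1-1) (ft a) = 0 := by
      intro a
      apply (hses' (i-1-1)).1
      have h0 : Q.d (i-1) (i-1-1) (ι'.f (i-1) (ft a)) = ι'.f (i-1-1) (P'.d (i-1) (i-1-1) (ft a)) :=
        ConcreteCategory.congr_hom (ι'.comm (i-1) (i-1-1)) (ft a)
      rw [← h0, hftap, hφbarcyc a, map_zero]
    obtain ⟨pt, hpt⟩ := pureAcyclic_lift R P' hpa' i (i-1) (by ring) A hA ft hftcyc
    set ψbar : A →ₗ[R] Q.X i := (ConcreteCategory.hom (C := ModuleCat R) (ι'.f i)) ∘ₗ pt with hψbar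
    have hψbard : ∀ a, Q.d i (i-1) (ψbar a) = φbar a := by
      intro a
      have h0 : Q.d i (i-1) (ι'.f i (pt a)) = ι'.f (i-1) (P'.d i (i-1) (pt a)) :=
        ConcreteCategory.congr_hom (ι'.comm i (i-1)) (pt a)
      show Q.d i (i-1) (ι'.f i (pt a)) = φbar a
      rw [h0, hpt a, hftap]
    obtain ⟨ψ₀, hψ₀⟩ := hdw i A hA ψbar
    have hψ₀ap : ∀ a, (Sm i).mkQ (ψ₀ a) = ψbar a := fun a => LinearMap.congr_fun hψ₀ a
    set ε : A →ₗ[R] C.X (i-1) := φ - (ConcreteCategory.hom (C := ModuleCat R) (C.d i (i-1))) ∘ₗ ψ₀ with hε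
    have hεmem : ∀ a, ε a ∈ Sm (i-1) := by
      intro a
      rw [← Submodule.Quotient.mk_eq_zero (Sm (i-1))]
      show Submodule.Quotient.mk (φ a - C.d i (i-1) (ψ₀ a)) = 0
      rw [Submodule.Quotient.mk_sub]
      have h1 : (Submodule.Quotient.mk (C.d i (i-1) (ψ₀ a)) : ↥(C.X (i-1)) ⧸ Sm (i-1)) =
          Q.d i (i-1) (Submodule.Quotient.mk (ψ₀ a)) := (quotCx_d_mk R C Sm hclosed i (i-1) _).symm
      rw [h1]
      have h2 : (Submodule.Quotient.mk (ψ₀ a) : ↥(C.X i) ⧸ Sm i) = ψbar a := hψ₀ap a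
      rw [h2, hψbard a]
      show φbar a - φbar a = 0
      rw [sub_self]
    have hεcyc : ∀ a, C.d (i-1) (i-1-1) (ε a) = 0 := by
      intro a
      show C.d (i-1) (i-1-1) (φ a - C.d i (i-1) (ψ₀ a)) = 0
      rw [map_sub, hcyc a, d_d_zero R C i (i-1) (i-1-1) (ψ₀ a), sub_self]
    obtain ⟨θ, hθmem, hθd⟩ := hpa i A hA ε hεmem hεcyc
    refine ⟨ψ₀ + θ, ?_, ?_⟩
    · intro a
      show (Sm i).mkQ (ψ₀ a + θ a) ∈ T i
      rw [map_add, hψ₀ap a]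
      have h3 : (Sm i).mkQ (θ a) = 0 := by
        rw [Submodule.mkQ_apply, Submodule.Quotient.mk_eq_zero]
        exact hθmem a
      erw [h3, add_zero]
      exact ⟨pt a, rfl⟩
    · intro a
      show C.d i (i-1) (ψ₀ a + θ a) = φ a
      rw [map_add, hθd a]
      show C.d i (i-1) (ψ₀ a) + (φ a - C.d i (i-1) (ψ₀ a)) = φ a
      abel
  -- maximality
  have hS'le : S' ≤ Sm := hmaxi ⟨hS'closed, hS'dw, hS'pa⟩ (fun i => hSmle i)
  have hT0 : ∀ (i : ℤ) (q : Q.X i), q ∈ T i → q = 0 := by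
    intro i q hq
    obtain ⟨x, rfl⟩ := Submodule.mkQ_surjective (Sm i) q
    have hx : x ∈ S' i := hq
    erw [Submodule.mkQ_apply, Submodule.Quotient.mk_eq_zero]
    exact hS'le i hx
  refine isZero_of_components R (fun i x => ?_)
  apply (hses' i).1
  rw [map_zero]
  exact hT0 i (ι'.f i x) ⟨x, rfl⟩



lemma isZero_component_eq_zero {P' : Cx R} (h : IsZero P') (i : ℤ) (x : P'.X i) : x = 0 := by
  have hid : 𝟙 P' = 0 := (IsZero.iff_id_eq_zero P').mp h
  have h2 : HomologicalComplex.Hom.f (𝟙 P') i x = HomologicalComplex.Hom.f (0 : P' ⟶ P') i x := by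
    rw [hid]
  simpa using h2

section ThreeTerm

variable {Mm Nn : Type u} [AddCommGroup Mm] [AddCommGroup Nn] [Module R Mm] [Module R Nn]
variable (g' : Mm →ₗ[R] Nn)

/-- components of the three-term complex `0 → ker g' → Mm → Nn → 0`. -/
noncomputable def tX (i : ℤ) : ModuleCat.{u} R :=
  if i = 0 then ModuleCat.of R Nn else if i = 1 then ModuleCat.of R Mm
  else if i = 2 then ModuleCat.of R ↥(LinearMap.ker g') else ModuleCat.of R PUnit.{u+1}

/-- differentials of the three-term complex -/
noncomputable def td (i j : ℤ) : tX R g' i ⟶ tX R g' j :=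
  if h : i = 1 ∧ j = 0 then
    eqToHom (show tX R g' i = ModuleCat.of R Mm by rw [h.1]; rfl) ≫ toHom R g' ≫
      eqToHom (show ModuleCat.of R Nn = tX R g' j by rw [h.2]; rfl)
  else if h : i = 2 ∧ j = 1 then
    eqToHom (show tX R g' i = ModuleCat.of R ↥(LinearMap.ker g') by rw [h.1]; rfl) ≫
      toHom R (LinearMap.ker g').subtype ≫
      eqToHom (show ModuleCat.of R Mm = tX R g' j by rw [h.2]; rfl)
  else 0

lemma td_eq_zero (i j : ℤ) (h1 : ¬(i = 1 ∧ j = 0)) (h2 : ¬(i = 2 ∧ j = 1)) :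
    td R g' i j = 0 := by
  unfold td
  rw [dif_neg h1, dif_neg h2]

/-- The three-term complex. -/
noncomputable def C3 : Cx R where
  X := tX R g'
  d := td R g'
  shape i j hrel := by
    have h0 : ¬(j + 1 = i) := fun h => hrel h
    exact td_eq_zero R g' i j (by omega) (by omega)
  d_comp_d' i j k hij hjk := by
    have hj : j + 1 = i := hij
    have hk : k + 1 = j := hjk
    by_cases h2 : i = 2
    · have hj1 : j = 1 := by omega
      have hk0 : k = 0 := by omega
      subst h2; subst hj1; subst hk0
      show td R g' 2 1 ≫ td R g' 1 0 = 0
      have e1 : td R g' 2 1 = toHom R (LinearMap.ker g').subtype := rfl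
      have e2 : td R g' 1 0 = toHom R g' := rfl
      rw [e1, e2]
      refine ConcreteCategory.hom_ext _ _ fun x => ?_
      show g' ((LinearMap.ker g').subtype x) = 0
      exact x.2
    · by_cases hi1 : i = 1
      · have hj0 : j = 0 := by omega
        subst hi1; subst hj0
        rw [td_eq_zero R g' 0 k (by omega) (by omega), comp_zero]
      · rw [td_eq_zero R g' i j (by omega) (by omega), zero_comp]

lemma C3_acyclic (hg : Function.Surjective g') : Acyclic R (C3 R g') := by
  intro i
  by_cases h0 : i = 0
  · subst h0
    intro x
    constructor
    · intro _
      obtain ⟨m, hm⟩ := hg x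
      exact ⟨m, hm⟩
    · intro _
      rfl
  · by_cases h1 : i = 1
    · subst h1
      intro x
      constructor
      · intro hx
        have hx' : g' x = 0 := hx
        exact ⟨⟨x, hx'⟩, rfl⟩
      · rintro ⟨y, rfl⟩
        exact y.2
    · by_cases h2 : i = 2
      · subst h2
        intro x
        constructor
        · intro hx
          refine ⟨0, ?_⟩
          have hx0 : x = 0 := (Submodule.injective_subtype (LinearMap.ker g'))
            (show (LinearMap.ker g').subtype x = (LinearMap.ker g').subtype 0 by
              rw [map_zero]; exact hx)
          rw [hx0]
          exact map_zero _
        · rintro ⟨y, rfl⟩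
          exact d_d_zero R (C3 R g') (2+1) 2 (2-1) y
      · have hX : (C3 R g').X i = ModuleCat.of R PUnit.{u+1} := by
          show tX R g' i = _
          unfold tX
          rw [if_neg h0, if_neg h1, if_neg h2]
        have hsub : Subsingleton ((C3 R g').X i) := by
          rw [hX]; infer_instance
        intro x
        have hx : x = 0 := Subsingleton.elim x 0
        subst hx
        constructor
        · intro _
          exact ⟨0, map_zero _⟩
        · intro _
          exact map_zero _

end ThreeTerm

/-- The main backward implication: if the zero complex is the only acyclic pure-minimal
complex, then `R` is von Neumann regular. -/
theorem main_backward (H : ∀ M : Cx R, Acyclic R M → PureMinimal R M → IsZero M) :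
    VonNeumannRegular R := by
  intro N _ _ L M' _ _ _ _ f g hses
  refine homExact_of_surj R hses ?_
  intro A _ _ hA
  intro φ
  have hub : ∀ c ⊆ setOf (Good R (C3 R g)), IsChain (· ≤ ·) c →
      ∃ ub ∈ setOf (Good R (C3 R g)), ∀ z ∈ c, z ≤ ub := by
    intro c hc hchain
    rcases Set.eq_empty_or_nonempty c with rfl | hne
    · exact ⟨(fun _ => ⊥), good_bot R (C3 R g), fun z hz => absurd hz (Set.notMem_empty z)⟩
    · refine ⟨(fun i => ⨆ (s : c), (s : ∀ i, Submodule R ((C3 R g).X i)) i),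
        chain_good_ub R (C3 R g) (fun s hs => hc hs) hchain hne, ?_⟩
      intro z hz i
      exact le_iSup (fun (s : c) => (s : ∀ i, Submodule R ((C3 R g).X i)) i) ⟨z, hz⟩
  obtain ⟨Sm, hmax⟩ := zorn_le₀ (setOf (Good R (C3 R g))) hub
  have hQac : Acyclic R (quotCx R (C3 R g) Sm hmax.1.1) :=
    quotCx_acyclic R (C3 R g) Sm hmax.1.1 (C3_acyclic R g hses.2.1)
      (fun i x hx hc => goodPA_elem R (C3 R g) hmax.1.2.2 i x hx hc)
  have hQzero := H _ hQac (quot_pureMinimal R (C3 R g) Sm hmax)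
  have hTop : ∀ i, Sm i = ⊤ := by
    intro i
    refine quotCx_subsingleton_top R (C3 R g) Sm hmax.1.1 i ?_
    exact ⟨fun x y => by
      rw [isZero_component_eq_zero R hQzero i x, isZero_component_eq_zero R hQzero i y]⟩
  obtain ⟨ψ, _, hd⟩ := hmax.1.2.2 1 A hA (show A →ₗ[R] (C3 R g).X (1-1) from φ)
    (fun a => by rw [hTop (1-1)]; trivial)
    (fun a => rfl)
  exact ⟨ψ, LinearMap.ext fun a => hd a⟩

end Proofs

/-- Corollary 5.2: characterizations of von Neumann regular rings by
pure-minimality. -/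
theorem statement15 :
    (VonNeumannRegular R ↔ ∀ M : Cx R, Acyclic R M → PureMinimal R M → IsZero M) ∧
    (VonNeumannRegular R ↔ ∀ M : Cx R,
      (PureMinimal R M ↔
        ∀ (A : Cx R) (ι : A ⟶ M), (∀ i, Function.Injective (ι.f i)) →
          Acyclic R A → IsZero A)) := by
  constructor
  · constructor
    · intro hv M hac hmin
      exact part1_forward R hv M hac hmin
    · intro H
      exact main_backward R H
  · constructor
    · intro hv M
      constructor
      · intro hmin A ι hinj hA
        exact part2_forward R hv M hmin A ι hinj hA
      · intro h
        exact pureMinimal_of_onlyZeroAcyclicSub R M h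
    · intro H
      apply main_backward R
      intro M hac hmin
      exact ((H M).mp hmin) M (𝟙 M) (fun i => by intro x y hxy; simpa using hxy) hac

end PaperPM
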